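/- Let κ ≥ 0, M ≥ 0, K ≥ 0, 0 < L ≤ 2π and t ∈ ℝ. Let a, b : ℝ → ℝ be continuous with |b(τ)| ≤ κ for all τ ∈ [t, t+2π], and let g : ℝ → ℂ be continuous with |g(τ)| ≤ M for all τ ∈ [t, t+2π]. Assume that for every open interval I ⊂ [t, t+2π] with length |I| ≥ L there exists s ∈ I with ∫_s^t b(τ) dτ ≤ K. Then |∫₀^{2π} e^{i ∫_t^{t+s}(a(τ) + i b(τ)) dτ} g(t+s) ds| ≤ 2π e^{κL + K} M. -/

import Mathlib

/-- Key estimate for the forward integral representation: if on every open subinterval of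
`[t, t+2π]` of length at least `L` the primitive of `b` comes back within `K` of its value at
`t`, then the oscillatory integral is bounded by `2π e^{κL+K} M`. -/
theorem stmt_10 (κ M K L t : ℝ)
    (hκ : 0 ≤ κ) (hM : 0 ≤ M) (hK : 0 ≤ K) (hL0 : 0 < L) (hL2 : L ≤ 2 * Real.pi)
    (a b : ℝ → ℝ) (ha : Continuous a) (hb : Continuous b)
    (hbκ : ∀ τ ∈ Set.Icc t (t + 2 * Real.pi), |b τ| ≤ κ)
    (g : ℝ → ℂ) (hg : Continuous g)
    (hgM : ∀ τ ∈ Set.Icc t (t + 2 * Real.pi), ‖g τ‖ ≤ M)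
    (hosc : ∀ p q : ℝ, t ≤ p → q ≤ t + 2 * Real.pi → L ≤ q - p →
      ∃ s ∈ Set.Ioo p q, (∫ τ in s..t, b τ) ≤ K) :
    ‖∫ s in (0:ℝ)..(2 * Real.pi),
        Complex.exp (Complex.I *
          ∫ τ in t..(t + s), ((a τ : ℂ) + Complex.I * (b τ : ℂ))) * g (t + s)‖
      ≤ 2 * Real.pi * Real.exp (κ * L + K) * M := by
  have hπ : (0:ℝ) < 2 * Real.pi := by positivity
  have haC : Continuous fun τ : ℝ => (a τ : ℂ) := Complex.continuous_ofReal.comp ha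
  have hbC : Continuous fun τ : ℝ => Complex.I * (b τ : ℂ) :=
    continuous_const.mul (Complex.continuous_ofReal.comp hb)
  have key : ∀ s ∈ Set.Icc (0:ℝ) (2 * Real.pi),
      ‖Complex.exp (Complex.I *
          ∫ τ in t..(t + s), ((a τ : ℂ) + Complex.I * (b τ : ℂ))) * g (t + s)‖
        ≤ Real.exp (κ * L + K) * M := by
    intro s hs
    set p := max t (t + s - L) with hp
    have hpt : t ≤ p := le_max_left _ _
    have hpL : t + s - L ≤ p := le_max_right _ _
    have hple : p ≤ t + s := by
      rcases max_cases t (t + s - L) with ⟨e1, _⟩ | ⟨e1, _⟩ <;> rw [hp, e1] <;>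
        linarith [hs.1, hL0.le]
    have hpq : p + L ≤ t + 2 * Real.pi := by
      rcases max_cases t (t + s - L) with ⟨e1, _⟩ | ⟨e1, _⟩ <;> rw [hp, e1] <;>
        linarith [hs.1, hs.2]
    obtain ⟨s', hs', hK'⟩ := hosc p (p + L) hpt hpq (by linarith)
    have hs'mem : s' ∈ Set.Icc t (t + 2 * Real.pi) :=
      ⟨le_trans hpt hs'.1.le, le_trans hs'.2.le hpq⟩
    have hts : t + s ∈ Set.Icc t (t + 2 * Real.pi) := ⟨by linarith [hs.1], by linarith [hs.2]⟩
    have hdist : |t + s - s'| ≤ L := by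
      rcases hs' with ⟨h1, h2⟩
      rw [abs_le]; constructor <;> linarith
    have hsub : Set.uIoc s' (t + s) ⊆ Set.Icc t (t + 2 * Real.pi) := fun x hx =>
      ⟨(le_min hs'mem.1 hts.1).trans hx.1.le, hx.2.trans (max_le hs'mem.2 hts.2)⟩
    have hint : |∫ τ in s'..(t + s), b τ| ≤ κ * L := by
      have h := intervalIntegral.norm_integral_le_of_norm_le_const (C := κ) (f := b)
        (a := s') (b := t + s)
        (fun x hx => by rw [Real.norm_eq_abs]; exact hbκ x (hsub hx))
      rw [Real.norm_eq_abs] at h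
      calc |∫ τ in s'..(t + s), b τ| ≤ κ * |t + s - s'| := h
        _ ≤ κ * L := mul_le_mul_of_nonneg_left hdist hκ
    have hsplit : (∫ τ in t..(t + s), b τ)
        = (∫ τ in t..s', b τ) + ∫ τ in s'..(t + s), b τ :=
      (intervalIntegral.integral_add_adjacent_intervals (hb.intervalIntegrable _ _)
        (hb.intervalIntegrable _ _)).symm
    have hbound : -(∫ τ in t..(t + s), b τ) ≤ κ * L + K := by
      have h1 : -(∫ τ in t..s', b τ) ≤ K := by
        rw [← intervalIntegral.integral_symm]; exact hK'
      have h2 : -(∫ τ in s'..(t + s), b τ) ≤ κ * L := (neg_le_abs _).trans hint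
      rw [hsplit]; linarith
    have hZ : (∫ τ in t..(t + s), ((a τ : ℂ) + Complex.I * (b τ : ℂ)))
        = ((∫ τ in t..(t + s), a τ : ℝ) : ℂ)
          + Complex.I * ((∫ τ in t..(t + s), b τ : ℝ) : ℂ) := by
      rw [intervalIntegral.integral_add (haC.intervalIntegrable _ _) (hbC.intervalIntegrable _ _),
        intervalIntegral.integral_const_mul, intervalIntegral.integral_ofReal,
        intervalIntegral.integral_ofReal]
    have hnorm : ‖Complex.exp (Complex.I *
        ∫ τ in t..(t + s), ((a τ : ℂ) + Complex.I * (b τ : ℂ)))‖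
        = Real.exp (-(∫ τ in t..(t + s), b τ)) := by
      rw [hZ, Complex.norm_exp]
      congr 1
      simp [Complex.add_re, Complex.mul_re, Complex.I_re, Complex.I_im]
    calc ‖Complex.exp (Complex.I *
          ∫ τ in t..(t + s), ((a τ : ℂ) + Complex.I * (b τ : ℂ))) * g (t + s)‖
        = Real.exp (-(∫ τ in t..(t + s), b τ)) * ‖g (t + s)‖ := by rw [norm_mul, hnorm]
      _ ≤ Real.exp (κ * L + K) * M :=
          mul_le_mul (Real.exp_le_exp.mpr hbound) (hgM _ hts) (norm_nonneg _)
            (Real.exp_nonneg _)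
  have hmain := intervalIntegral.norm_integral_le_of_norm_le_const
    (C := Real.exp (κ * L + K) * M)
    (f := fun s => Complex.exp (Complex.I *
      ∫ τ in t..(t + s), ((a τ : ℂ) + Complex.I * (b τ : ℂ))) * g (t + s))
    (a := (0:ℝ)) (b := 2 * Real.pi)
    (fun x hx => by
      refine key x ?_
      rw [Set.uIoc_of_le hπ.le] at hx
      exact ⟨hx.1.le, hx.2⟩)
  calc ‖∫ s in (0:ℝ)..(2 * Real.pi),
        Complex.exp (Complex.I *
          ∫ τ in t..(t + s), ((a τ : ℂ) + Complex.I * (b τ : ℂ))) * g (t + s)‖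
      ≤ Real.exp (κ * L + K) * M * |2 * Real.pi - 0| := hmain
    _ = 2 * Real.pi * Real.exp (κ * L + K) * M := by
        rw [abs_of_pos (by linarith)]; ring
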